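/- arXiv:1706.09223 — 4 statements merged into one kernel-verified Lean document; each statement's English description precedes it below -/
import Mathlib

section
/- For m > 0 and α = √(2m² + 4), the function Z(s) = log( 4α² m^{α+2} s^{α-2} / ((α+2) m^α + (α-2) s^α)² ) solves -Z'' - Z'/s = e^Z on (0,∞), satisfies Z(m) = 0 and Z'(m) = 0, and Z(s) ≤ 0 on its domain. -/
open Real MeasureTheory

/-- For `m > 0` and `α = √(2m² + 4)`, the function
`Z(s) = log(4α² m^{α+2} s^{α-2} / ((α+2)m^α + (α-2)s^α)²)` solves `-Z'' - Z'/s = e^Z`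
on `(0,∞)`, satisfies `Z(m) = 0`, `Z'(m) = 0`, and `Z ≤ 0` on `(0,∞)`. -/
theorem singular_liouville_solution (m : ℝ) (hm : 0 < m)
    (α : ℝ) (hα : α = Real.sqrt (2 * m ^ 2 + 4))
    (Z : ℝ → ℝ)
    (hZ : Z = fun s : ℝ =>
      Real.log (4 * α ^ 2 * m ^ (α + 2) * s ^ (α - 2) /
        ((α + 2) * m ^ α + (α - 2) * s ^ α) ^ 2)) :
    (∀ s : ℝ, 0 < s → -(deriv (deriv Z) s) - deriv Z s / s = Real.exp (Z s)) ∧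
    Z m = 0 ∧ deriv Z m = 0 ∧ (∀ s : ℝ, 0 < s → Z s ≤ 0) := by
  have hsq : α ^ 2 = 2 * m ^ 2 + 4 := by
    rw [hα, Real.sq_sqrt]; positivity
  have hα2 : 2 < α := by
    nlinarith [Real.sqrt_nonneg (2 * m ^ 2 + 4), sq_nonneg m, hsq]
  have hα0 : 0 < α := by linarith
  set D : ℝ → ℝ := fun s => (α + 2) * m ^ α + (α - 2) * s ^ α with hDdef
  have hDpos : ∀ s : ℝ, 0 < s → 0 < D s := fun s hs => by
    have h1 := Real.rpow_pos_of_pos hm α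
    have h2 := Real.rpow_pos_of_pos hs α
    have : 0 < α - 2 := by linarith
    exact add_pos (mul_pos (by linarith) h1) (mul_pos this h2)
  have hNpos : ∀ s : ℝ, 0 < s → 0 < 4 * α ^ 2 * m ^ (α + 2) * s ^ (α - 2) := fun s hs => by
    have := Real.rpow_pos_of_pos hm (α + 2)
    have := Real.rpow_pos_of_pos hs (α - 2)
    positivity
  -- derivative of D
  have hDderiv : ∀ s : ℝ, 0 < s → HasDerivAt D ((α - 2) * (α * s ^ (α - 1))) s := by
    intro s hs
    have h1 : HasDerivAt (fun t : ℝ => t ^ α) (α * s ^ (α - 1)) s :=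
      Real.hasDerivAt_rpow_const (Or.inl hs.ne')
    exact (h1.const_mul (α - 2)).const_add ((α + 2) * m ^ α)
  -- Z equals log-split on Ioi 0
  have hZsplit : ∀ s : ℝ, 0 < s → Z s =
      Real.log (4 * α ^ 2 * m ^ (α + 2)) + (α - 2) * Real.log s - 2 * Real.log (D s) := by
    intro s hs
    have hC : (4 * α ^ 2 * m ^ (α + 2)) ≠ 0 := by
      have := Real.rpow_pos_of_pos hm (α + 2); positivity
    have hr : s ^ (α - 2) ≠ 0 := (Real.rpow_pos_of_pos hs _).ne'
    have hD2 : (D s) ^ 2 ≠ 0 := pow_ne_zero 2 (hDpos s hs).ne'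
    rw [hZ]
    simp only
    rw [Real.log_div (by positivity) hD2, Real.log_mul hC hr,
      Real.log_rpow hs, Real.log_pow]
    push_cast; ring
  -- first derivative
  set g : ℝ → ℝ := fun s => (α - 2) / s - 2 * ((α - 2) * (α * s ^ (α - 1))) / D s with hgdef
  have hZderiv : ∀ s : ℝ, 0 < s → HasDerivAt Z (g s) s := by
    intro s hs
    have hL : HasDerivAt (fun t : ℝ =>
        Real.log (4 * α ^ 2 * m ^ (α + 2)) + (α - 2) * Real.log t - 2 * Real.log (D t))
        (g s) s := by
      have h1 : HasDerivAt (fun t : ℝ => Real.log t) s⁻¹ s := Real.hasDerivAt_log hs.ne'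
      have h2 : HasDerivAt (fun t : ℝ => Real.log (D t))
          ((α - 2) * (α * s ^ (α - 1)) / D s) s := by
        exact ((Real.hasDerivAt_log (hDpos s hs).ne').comp s (hDderiv s hs)).congr_deriv
          (by ring)
      have := (((h1.const_mul (α - 2)).const_add (Real.log (4 * α ^ 2 * m ^ (α + 2)))).sub (h2.const_mul 2))
      exact this.congr_deriv (by
        show _ = (α - 2) / s - 2 * ((α - 2) * (α * s ^ (α - 1))) / D s
        ring)
    exact hL.congr_of_eventuallyEq <| by
      filter_upwards [Ioi_mem_nhds hs] with t ht using (hZsplit t ht)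
  have hdZ : ∀ s : ℝ, 0 < s → deriv Z s = g s := fun s hs => (hZderiv s hs).deriv
  -- second derivative
  set g' : ℝ → ℝ := fun s => -((α - 2) / s ^ 2) -
    (2 * ((α - 2) * (α * ((α - 1) * s ^ (α - 2)))) * D s -
      2 * ((α - 2) * (α * s ^ (α - 1))) * ((α - 2) * (α * s ^ (α - 1)))) / (D s) ^ 2
    with hg'def
  have hgderiv : ∀ s : ℝ, 0 < s → HasDerivAt g (g' s) s := by
    intro s hs
    have h1 : HasDerivAt (fun t : ℝ => (α - 2) / t) (-((α - 2) / s ^ 2)) s := by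
      simpa [div_eq_mul_inv, neg_div, mul_comm, mul_div_assoc] using
        (hasDerivAt_inv hs.ne').const_mul (α - 2)
    have hnum : HasDerivAt (fun t : ℝ => 2 * ((α - 2) * (α * t ^ (α - 1))))
        (2 * ((α - 2) * (α * ((α - 1) * s ^ (α - 2))))) s := by
      have h3 : HasDerivAt (fun t : ℝ => t ^ (α - 1)) ((α - 1) * s ^ (α - 1 - 1)) s :=
        Real.hasDerivAt_rpow_const (Or.inl hs.ne')
      have : α - 1 - 1 = α - 2 := by ring
      rw [this] at h3
      simpa [mul_assoc] using ((h3.const_mul α).const_mul (α - 2)).const_mul 2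
    have h2 := hnum.div (hDderiv s hs) (hDpos s hs).ne'
    exact (h1.sub h2)
  have hdd : ∀ s : ℝ, 0 < s → deriv (deriv Z) s = g' s := by
    intro s hs
    have : deriv Z =ᶠ[nhds s] g := by
      filter_upwards [Ioi_mem_nhds hs] with t ht using hdZ t ht
    rw [this.deriv_eq]
    exact (hgderiv s hs).deriv
  refine ⟨?_, ?_, ?_, ?_⟩
  · -- ODE
    intro s hs
    rw [hdd s hs, hdZ s hs, hZ]
    simp only
    rw [Real.exp_log (by exact div_pos (hNpos s hs) (pow_pos (hDpos s hs) 2))]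
    have hDs := hDpos s hs
    have e1 : s ^ (α - 1) = s ^ (α - 2) * s := by
      rw [show α - 1 = (α - 2) + 1 by ring, Real.rpow_add hs, Real.rpow_one]
    have e2 : s ^ α = s ^ (α - 2) * s ^ 2 := by
      rw [show α = (α - 2) + 2 by ring, Real.rpow_add hs]
      norm_num [Real.rpow_natCast]
    have e3 : m ^ (α + 2) = m ^ α * m ^ 2 := by
      rw [Real.rpow_add hm]
      norm_num [Real.rpow_natCast]
    rw [hg'def, hgdef]
    simp only
    rw [e1, e3]
    rw [hDdef] at hDs ⊢
    simp only [e2] at hDs ⊢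
    set A := s ^ (α - 2) with hA
    set M := m ^ α with hM
    have hApos : 0 < A := Real.rpow_pos_of_pos hs _
    have hm2 : (4:ℝ) * α ^ 2 * (M * m ^ 2) * A = 2 * (α - 2) * (α + 2) * α ^ 2 * M * A := by
      linear_combination (-2 * α ^ 2 * M * A) * hsq
    calc -(-((α - 2) / s ^ 2) -
          (2 * ((α - 2) * (α * ((α - 1) * A))) * ((α + 2) * M + (α - 2) * (A * s ^ 2)) -
            2 * ((α - 2) * (α * (A * s))) * ((α - 2) * (α * (A * s)))) /
            ((α + 2) * M + (α - 2) * (A * s ^ 2)) ^ 2) -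
          ((α - 2) / s - 2 * ((α - 2) * (α * (A * s))) / ((α + 2) * M + (α - 2) * (A * s ^ 2))) / s
        = 2 * (α - 2) * (α + 2) * α ^ 2 * M * A /
            ((α + 2) * M + (α - 2) * (A * s ^ 2)) ^ 2 := by
          have hE : (α + 2) * M + (α - 2) * (A * s ^ 2) ≠ 0 := hDs.ne'
          generalize hE' : (α + 2) * M + (α - 2) * (A * s ^ 2) = E at hE ⊢
          field_simp
          rw [← hE']
          ring
      _ = 4 * α ^ 2 * (M * m ^ 2) * A / ((α + 2) * M + (α - 2) * (A * s ^ 2)) ^ 2 := by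
          rw [hm2]
  · -- Z m = 0
    rw [hZ]
    simp only
    have e3 : m ^ (α + 2) * m ^ (α - 2) = (m ^ α) ^ 2 := by
      rw [← Real.rpow_add hm, ← Real.rpow_natCast (m ^ α) 2, ← Real.rpow_mul hm.le]
      norm_num
      ring_nf
    have hMpos : 0 < m ^ α := Real.rpow_pos_of_pos hm α
    have : 4 * α ^ 2 * m ^ (α + 2) * m ^ (α - 2) /
        ((α + 2) * m ^ α + (α - 2) * m ^ α) ^ 2 = 1 := by
      rw [mul_assoc, e3, show (α + 2) * m ^ α + (α - 2) * m ^ α = 2 * α * m ^ α by ring]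
      rw [div_eq_one_iff_eq (by positivity)]
      ring
    rw [this, Real.log_one]
  · -- Z' m = 0
    rw [hdZ m hm, hgdef]
    simp only [hDdef]
    have e1 : m ^ α = m ^ (α - 1) * m := by
      rw [← Real.rpow_add_one hm.ne', sub_add_cancel]
    rw [e1]
    have h1 : (0:ℝ) < m ^ (α - 1) := Real.rpow_pos_of_pos hm _
    rw [show (α + 2) * (m ^ (α - 1) * m) + (α - 2) * (m ^ (α - 1) * m)
        = 2 * α * m ^ (α - 1) * m by ring]
    rw [sub_eq_zero, div_eq_div_iff hm.ne' (by positivity)]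
    ring
  · -- Z ≤ 0
    intro s hs
    rw [hZ]
    simp only
    apply Real.log_nonpos
    · positivity
    · rw [div_le_one (pow_pos (hDpos s hs) 2)]
      -- key inequality
      have key : 2 * α * (m ^ ((α + 2) / 2) * s ^ ((α - 2) / 2)) ≤ D s := by
        have w1 : (0:ℝ) ≤ (α + 2) / (2 * α) := by positivity
        have w2 : (0:ℝ) ≤ (α - 2) / (2 * α) := by
          apply div_nonneg (by linarith) (by positivity)
        have p1 : (0:ℝ) ≤ 2 * α * m ^ α := by
          have := Real.rpow_pos_of_pos hm α; positivity
        have p2 : (0:ℝ) ≤ 2 * α * s ^ α := by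
          have := Real.rpow_pos_of_pos hs α; positivity
        have hsum : (α + 2) / (2 * α) + (α - 2) / (2 * α) = 1 := by
          field_simp; ring
        have := Real.geom_mean_le_arith_mean2_weighted w1 w2 p1 p2 hsum
        have hMpos : (0:ℝ) < m ^ α := Real.rpow_pos_of_pos hm α
        have hSpos : (0:ℝ) < s ^ α := Real.rpow_pos_of_pos hs α
        calc 2 * α * (m ^ ((α + 2) / 2) * s ^ ((α - 2) / 2))
            = (2 * α * m ^ α) ^ ((α + 2) / (2 * α)) * (2 * α * s ^ α) ^ ((α - 2) / (2 * α)) := by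
              rw [Real.mul_rpow (by positivity) hMpos.le, Real.mul_rpow (by positivity) hSpos.le,
                ← Real.rpow_mul hm.le, ← Real.rpow_mul hs.le,
                show α * ((α + 2) / (2 * α)) = (α + 2) / 2 by field_simp,
                show α * ((α - 2) / (2 * α)) = (α - 2) / 2 by field_simp,
                ]
              have h2a : (2 * α) ^ ((α + 2) / (2 * α)) * (2 * α) ^ ((α - 2) / (2 * α)) = 2 * α := by
                rw [← Real.rpow_add (by positivity : (0:ℝ) < 2 * α), hsum, Real.rpow_one]
              linear_combination (-(m ^ ((α + 2) / 2) * s ^ ((α - 2) / 2))) * h2a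
          _ ≤ (α + 2) / (2 * α) * (2 * α * m ^ α) + (α - 2) / (2 * α) * (2 * α * s ^ α) := this
          _ = D s := by field_simp; ring
      calc 4 * α ^ 2 * m ^ (α + 2) * s ^ (α - 2)
          = (2 * α * (m ^ ((α + 2) / 2) * s ^ ((α - 2) / 2))) ^ 2 := by
            have h1 : (m ^ ((α + 2) / 2)) ^ 2 = m ^ (α + 2) := by
              rw [← Real.rpow_natCast (m ^ ((α + 2) / 2)) 2, ← Real.rpow_mul hm.le]
              norm_num
            have h2 : (s ^ ((α - 2) / 2)) ^ 2 = s ^ (α - 2) := by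
              rw [← Real.rpow_natCast (s ^ ((α - 2) / 2)) 2, ← Real.rpow_mul hs.le]
              norm_num
            rw [mul_pow, mul_pow, mul_pow, h1, h2]; ring
        _ ≤ (D s) ^ 2 := by
            apply pow_le_pow_left₀ (by positivity) key
end

section
/- For m > 0 and α = √(2m²+4), the singular Liouville solution Z(s) = log(4α² m^{α+2} s^{α-2} / ((α+2)m^α + (α-2)s^α)²) satisfies (1/2)∫_0^∞ e^{Z(s)} s ds = √(2m² + 4), which is strictly greater than 2. -/
open Real MeasureTheory

/-- For `m > 0` and `α = √(2m²+4)`, the singular Liouville solution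
`Z(s) = log(4α² m^{α+2} s^{α-2} / ((α+2)m^α + (α-2)s^α)²)` satisfies
`(1/2)∫_0^∞ e^{Z(s)} s ds = √(2m²+4) > 2`. -/
theorem singular_liouville_mass (m : ℝ) (hm : 0 < m)
    (α : ℝ) (hα : α = Real.sqrt (2 * m ^ 2 + 4))
    (Z : ℝ → ℝ)
    (hZ : Z = fun s : ℝ =>
      Real.log (4 * α ^ 2 * m ^ (α + 2) * s ^ (α - 2) /
        ((α + 2) * m ^ α + (α - 2) * s ^ α) ^ 2)) :
    (1 / 2) * (∫ s in Set.Ioi (0:ℝ), Real.exp (Z s) * s) = Real.sqrt (2 * m ^ 2 + 4) ∧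
    2 < Real.sqrt (2 * m ^ 2 + 4) := by
  have h4 : (0:ℝ) ≤ 2 * m ^ 2 + 4 := by positivity
  have hαgt : 2 < α := by
    rw [hα]
    exact (Real.lt_sqrt (by norm_num)).mpr (by nlinarith)
  have hα2 : α ^ 2 = 2 * m ^ 2 + 4 := by rw [hα, Real.sq_sqrt h4]
  have hαpos : 0 < α := by linarith
  have hα2pos : 0 < α - 2 := by linarith
  set D : ℝ → ℝ := fun s => (α + 2) * m ^ α + (α - 2) * s ^ α with hD
  have hDpos : ∀ s : ℝ, 0 ≤ s → 0 < D s := by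
    intro s hs
    have h1 : 0 < (α + 2) * m ^ α := by positivity
    have h2 : 0 ≤ (α - 2) * s ^ α := by
      apply mul_nonneg (by linarith) (Real.rpow_nonneg hs α)
    simp only [hD]; linarith
  set c : ℝ := 4 * α * m ^ (α + 2) / (α - 2) with hc
  set F : ℝ → ℝ := fun s => -c / D s with hF
  have hderiv : ∀ s ∈ Set.Ioi (0:ℝ), HasDerivAt F (Real.exp (Z s) * s) s := by
    intro s hs
    have hs0 : 0 < s := hs
    have hDs : D s ≠ 0 := (hDpos s hs0.le).ne'
    have hD' : HasDerivAt D ((α - 2) * (α * s ^ (α - 1))) s := by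
      have := (Real.hasDerivAt_rpow_const (p := α) (Or.inl hs0.ne')).const_mul (α - 2)
      exact this.const_add ((α + 2) * m ^ α)
    have hFd : HasDerivAt F ((0 * D s - (-c) * ((α - 2) * (α * s ^ (α - 1)))) / (D s) ^ 2) s :=
      (hasDerivAt_const s (-c)).div hD' hDs
    convert hFd using 1
    have harg : 0 < 4 * α ^ 2 * m ^ (α + 2) * s ^ (α - 2) / (D s) ^ 2 := by
      have := Real.rpow_pos_of_pos hm (α + 2)
      have := Real.rpow_pos_of_pos hs0 (α - 2)
      positivity
    have hsplit : s ^ (α - 1) = s ^ (α - 2) * s := by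
      rw [show α - 1 = (α - 2) + 1 by ring, Real.rpow_add_one hs0.ne']
    rw [show Real.exp (Z s) = 4 * α ^ 2 * m ^ (α + 2) * s ^ (α - 2) / (D s) ^ 2 from by
      rw [hZ]; exact Real.exp_log harg]
    have hnum : (0 * D s - -c * ((α - 2) * (α * s ^ (α - 1))))
        = 4 * α ^ 2 * m ^ (α + 2) * s ^ (α - 1) := by
      rw [hc]; field_simp [hα2pos.ne']; ring
    rw [hnum, hsplit]; ring
  have hnonneg : ∀ s ∈ Set.Ioi (0:ℝ), 0 ≤ Real.exp (Z s) * s := by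
    intro s hs
    exact mul_nonneg (Real.exp_pos _).le (le_of_lt hs)
  have hcont : ContinuousWithinAt F (Set.Ici 0) 0 := by
    apply ContinuousAt.continuousWithinAt
    apply ContinuousAt.div continuousAt_const
    · apply ContinuousAt.add continuousAt_const
      exact (Real.continuousAt_rpow_const 0 α (Or.inr hαpos.le)).const_mul _
    · exact (hDpos 0 le_rfl).ne'
  have htend : Filter.Tendsto F Filter.atTop (nhds 0) := by
    apply Filter.Tendsto.div_atTop tendsto_const_nhds
    apply Filter.tendsto_atTop_add_const_left
    exact (tendsto_rpow_atTop hαpos).const_mul_atTop hα2pos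
  have key : ∫ s in Set.Ioi (0:ℝ), Real.exp (Z s) * s = 2 * α := by
    rw [integral_Ioi_of_hasDerivAt_of_nonneg hcont hderiv hnonneg htend]
    have hD0 : D 0 = (α + 2) * m ^ α := by
      simp [hD, Real.zero_rpow hαpos.ne']
    have hmsplit : m ^ (α + 2) = m ^ α * m ^ 2 := by
      rw [show α + 2 = α + ((2:ℕ):ℝ) by norm_num, Real.rpow_add hm, Real.rpow_natCast]
    have hprod : (α - 2) * (α + 2) = 2 * m ^ 2 := by nlinarith
    have hmα : m ^ α ≠ 0 := (Real.rpow_pos_of_pos hm α).ne'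
    simp only [hF, hc, hD0, hmsplit]
    field_simp
    linear_combination (-2 * α) * hα2
  constructor
  · rw [key, ← hα]; ring
  · rw [← hα]; exact hαgt
end

section
/- For any δ ≠ 0 and y ∈ ℝ, the function z(r) = log( (4/δ²) e^{√2 (log r − y)/δ} / (1 + e^{√2 (log r − y)/δ})² ) − 2 log r solves -z'' - z'/r = e^z on (0,∞). Moreover, if δ = 1/√2 and y = log(2√2), then lim_{r→0^+} z(r) = 0 and z(r) = -2 log(1 + r²/8). -/
open Real MeasureTheory Filter

/-- For `δ ≠ 0` and `y ∈ ℝ`, the function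
`z(r) = log((4/δ²) e^{√2(log r − y)/δ} / (1 + e^{√2(log r − y)/δ})²) − 2 log r`
solves `-z'' - z'/r = e^z` on `(0,∞)`. Moreover, for `δ = 1/√2` and `y = log(2√2)`,
`z(r) → 0` as `r → 0⁺` and `z(r) = -2 log(1 + r²/8)`. -/
theorem liouville_general_radial (δ y : ℝ) (hδ : δ ≠ 0) (z : ℝ → ℝ)
    (hz : z = fun r : ℝ =>
      Real.log ((4 / δ ^ 2) * Real.exp (Real.sqrt 2 * (Real.log r - y) / δ) /
        (1 + Real.exp (Real.sqrt 2 * (Real.log r - y) / δ)) ^ 2) - 2 * Real.log r) :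
    (∀ r : ℝ, 0 < r → -(deriv (deriv z) r) - deriv z r / r = Real.exp (z r)) ∧
    (δ = 1 / Real.sqrt 2 → y = Real.log (2 * Real.sqrt 2) →
      Tendsto z (nhdsWithin 0 (Set.Ioi 0)) (nhds 0) ∧
      ∀ r : ℝ, 0 < r → z r = -2 * Real.log (1 + r ^ 2 / 8)) := by
  have hs2 : Real.sqrt 2 ^ 2 = 2 := Real.sq_sqrt (by norm_num)
  have hspos : (0:ℝ) < Real.sqrt 2 := Real.sqrt_pos.mpr (by norm_num)
  have hcoef : (4:ℝ) / δ ^ 2 ≠ 0 := div_ne_zero (by norm_num) (pow_ne_zero _ hδ)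
  set u : ℝ → ℝ := fun r => Real.sqrt 2 * (Real.log r - y) / δ with hu_def
  set E : ℝ → ℝ := fun r => Real.exp (u r) with hE_def
  have hEpos : ∀ r, 0 < E r := fun r => Real.exp_pos _
  have h1E : ∀ r, (0:ℝ) < 1 + E r := fun r => by positivity
  -- rewritten form of z
  have hzeq : ∀ r : ℝ, 0 < r → z r =
      Real.log (4 / δ ^ 2) + u r - 2 * Real.log (1 + E r) - 2 * Real.log r := by
    intro r hr
    rw [hz]
    simp only
    rw [Real.log_div (mul_ne_zero hcoef (Real.exp_ne_zero _)) (pow_ne_zero _ (h1E r).ne'),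
      Real.log_mul hcoef (Real.exp_ne_zero _), Real.log_exp, Real.log_pow]
    push_cast
    ring
  -- first derivative
  set z₁ : ℝ → ℝ := fun r =>
    (Real.sqrt 2 / δ * ((1 - E r) / (1 + E r)) - 2) / r with hz1_def
  have hu' : ∀ r : ℝ, 0 < r → HasDerivAt u (Real.sqrt 2 * r⁻¹ / δ) r := by
    intro r hr
    exact (((Real.hasDerivAt_log hr.ne').sub_const y).const_mul (Real.sqrt 2)).div_const δ
  have hE' : ∀ r : ℝ, 0 < r →
      HasDerivAt E (E r * (Real.sqrt 2 * r⁻¹ / δ)) r := fun r hr => (hu' r hr).exp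
  have hzderiv : ∀ r : ℝ, 0 < r → HasDerivAt z (z₁ r) r := by
    intro r hr
    have hw : HasDerivAt
        (fun s => Real.log (4 / δ ^ 2) + u s - 2 * Real.log (1 + E s) - 2 * Real.log s)
        (Real.sqrt 2 * r⁻¹ / δ
          - 2 * ((E r * (Real.sqrt 2 * r⁻¹ / δ)) / (1 + E r)) - 2 * r⁻¹) r := by
      exact (((hu' r hr).const_add _).sub
        ((((hE' r hr).const_add 1).log (h1E r).ne').const_mul 2)).sub
        ((Real.hasDerivAt_log hr.ne').const_mul 2)
    have heq : z =ᶠ[nhds r]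
        (fun s => Real.log (4 / δ ^ 2) + u s - 2 * Real.log (1 + E s) - 2 * Real.log s) := by
      filter_upwards [isOpen_Ioi.mem_nhds hr] with s hs using hzeq s hs
    have h := hw.congr_of_eventuallyEq heq
    refine h.congr_deriv ?_
    rw [hz1_def]
    have h1e := (h1E r).ne'
    field_simp
    ring
  constructor
  · intro r hr
    -- second derivative of z at r equals deriv z₁ r
    have hdd : deriv (deriv z) r = deriv z₁ r := by
      apply Filter.EventuallyEq.deriv_eq
      filter_upwards [isOpen_Ioi.mem_nhds hr] with s hs using (hzderiv s hs).deriv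
    -- compute deriv z₁ r
    have hfrac : HasDerivAt (fun s => (1 - E s) / (1 + E s))
        ((-(E r * (Real.sqrt 2 * r⁻¹ / δ)) * (1 + E r)
          - (1 - E r) * (E r * (Real.sqrt 2 * r⁻¹ / δ))) / (1 + E r) ^ 2) r :=
      ((hE' r hr).const_sub 1).div ((hE' r hr).const_add 1) (h1E r).ne'
    have hF : HasDerivAt (fun s => Real.sqrt 2 / δ * ((1 - E s) / (1 + E s)) - 2)
        (Real.sqrt 2 / δ * ((-(E r * (Real.sqrt 2 * r⁻¹ / δ)) * (1 + E r)
          - (1 - E r) * (E r * (Real.sqrt 2 * r⁻¹ / δ))) / (1 + E r) ^ 2)) r :=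
      (hfrac.const_mul _).sub_const 2
    have hz1' : HasDerivAt z₁
        ((Real.sqrt 2 / δ * ((-(E r * (Real.sqrt 2 * r⁻¹ / δ)) * (1 + E r)
          - (1 - E r) * (E r * (Real.sqrt 2 * r⁻¹ / δ))) / (1 + E r) ^ 2) * r
          - (Real.sqrt 2 / δ * ((1 - E r) / (1 + E r)) - 2) * 1) / r ^ 2) r :=
      hF.div (hasDerivAt_id r) hr.ne'
    have hexp : Real.exp (z r) = 4 / δ ^ 2 * E r / ((1 + E r) ^ 2 * r ^ 2) := by
      rw [hzeq r hr, show Real.log (4 / δ ^ 2) + u r - 2 * Real.log (1 + E r)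
          - 2 * Real.log r
        = Real.log (4 / δ ^ 2) + u r - (2 * Real.log (1 + E r) + 2 * Real.log r) by ring,
        Real.exp_sub, Real.exp_add, Real.exp_add, Real.exp_log (by positivity),
        two_mul, two_mul, Real.exp_add, Real.exp_add, Real.exp_log (h1E r),
        Real.exp_log hr]
      show 4 / δ ^ 2 * E r / ((1 + E r) * (1 + E r) * (r * r)) = _
      ring
    rw [hdd, hz1'.deriv, (hzderiv r hr).deriv, hexp, hz1_def]
    have h1e := (h1E r).ne'
    have hrne := hr.ne'
    field_simp
    ring_nf
    rw [hs2]
    ring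
  · intro hδ2 hy2
    have hδsq : δ ^ 2 = 1 / 2 := by
      rw [hδ2, div_pow, hs2]; norm_num
    have hEval : ∀ r : ℝ, 0 < r → E r = r ^ 2 / 8 := by
      intro r hr
      rw [hE_def]
      simp only
      rw [hu_def]
      simp only
      have harg : Real.sqrt 2 * (Real.log r - y) / δ
          = 2 * Real.log r - 2 * Real.log (2 * Real.sqrt 2) := by
        rw [hδ2, hy2, div_div_eq_mul_div, div_one]
        linear_combination (Real.log r - Real.log (2 * Real.sqrt 2)) * hs2
      rw [harg, Real.exp_sub, two_mul, two_mul, Real.exp_add, Real.exp_add,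
        Real.exp_log hr, Real.exp_log (by positivity)]
      have : (2 * Real.sqrt 2) * (2 * Real.sqrt 2) = 8 := by
        linear_combination (4:ℝ) * hs2
      rw [this]
      ring
    have hclosed : ∀ r : ℝ, 0 < r → z r = -2 * Real.log (1 + r ^ 2 / 8) := by
      intro r hr
      have h18 : (0:ℝ) < 1 + r ^ 2 / 8 := by positivity
      rw [hzeq r hr, hEval r hr, hδsq]
      have hur : u r = 2 * Real.log r - 2 * Real.log (2 * Real.sqrt 2) := by
        rw [hu_def]; simp only
        rw [hδ2, hy2, div_div_eq_mul_div, div_one]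
        linear_combination (Real.log r - Real.log (2 * Real.sqrt 2)) * hs2
      rw [hur]
      have hlog8 : Real.log (2 * Real.sqrt 2) = Real.log 8 / 2 := by
        rw [show (8:ℝ) = (2 * Real.sqrt 2) ^ 2 by linear_combination (-4:ℝ) * hs2, Real.log_pow]
        push_cast; ring
      rw [hlog8]
      have : Real.log (4 / (1/2)) = Real.log 8 := by norm_num
      rw [this]
      ring
    refine ⟨?_, hclosed⟩
    have hcont : ContinuousAt (fun r : ℝ => -2 * Real.log (1 + r ^ 2 / 8)) 0 := by
      have h1 : ContinuousAt (fun r : ℝ => 1 + r ^ 2 / 8) 0 := by fun_prop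
      exact continuousAt_const.mul ((Real.continuousAt_log (by norm_num)).comp h1)
    have htend : Tendsto (fun r : ℝ => -2 * Real.log (1 + r ^ 2 / 8)) (nhds 0) (nhds 0) := by
      have := hcont.tendsto
      simpa using this
    refine (htend.mono_left nhdsWithin_le_nhds).congr' ?_
    exact Filter.eventuallyEq_of_mem self_mem_nhdsWithin (fun r hr => (hclosed r hr).symm)
end

section
/- Let w(r) = (2π)^{-1/2} (log(R/l))^{1/2} be the constant value of the Moser function on B_l, and suppose t² ≥ 4π(1+δ) for some δ > 0. Then λ ∫_{B_l} (t w)² e^{(tw)²} dx = (λ/2) t² l² log(R/l) e^{(t²/2π) log(R/l)} ≥ (λ/2) t² log(R/l) · exp( δ' log(1/l) ) for some δ' > 0, provided log(1/R) = o(log(1/l)). In particular, if R = R(n), l = l(n) with log(1/R_n)/log(1/l_n) → 0 and l_n → 0, the quantity tends to +∞, so the normalization identity t² = λ∫_B (tw)² e^{(tw)²+|tw|^{1+ε}} dx with bounded t² is contradicted unless limsup t² ≤ 4π. -/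
open Real MeasureTheory Filter Topology

private lemma key_ineq (lam δ li ti A L : ℝ) (hlam : 0 < lam) (hδ : 0 < δ)
    (hli : 0 < li) (hL : 0 < L) (hlog : Real.log li = -L) (hA : 0 ≤ A)
    (hAL : 2 * (1 + δ) * A ≤ δ * L)
    (ht : 4 * Real.pi * (1 + δ) ≤ ti ^ 2) :
    lam * Real.pi * (1 + δ) * L ≤
        lam / 2 * ti ^ 2 * li ^ 2 * (L - A) *
          Real.exp (ti ^ 2 / (2 * Real.pi) * (L - A)) ∧
      lam / 2 * ti ^ 2 * (L - A) * Real.exp (δ * L) ≤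
        lam / 2 * ti ^ 2 * li ^ 2 * (L - A) *
          Real.exp (ti ^ 2 / (2 * Real.pi) * (L - A)) := by
  have hπ : 0 < Real.pi := Real.pi_pos
  have h2π : (0:ℝ) < 2 * Real.pi := by linarith
  have hD : 0 ≤ L - A := by nlinarith
  have hDL : L / 2 ≤ L - A := by nlinarith
  have hdiv : 2 * (1 + δ) ≤ ti ^ 2 / (2 * Real.pi) := by
    rw [le_div_iff₀ h2π]; nlinarith
  have hexpmono : 2 * (1 + δ) * (L - A) ≤ ti ^ 2 / (2 * Real.pi) * (L - A) :=
    mul_le_mul_of_nonneg_right hdiv hD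
  have hli2 : li ^ 2 = Real.exp (-(2 * L)) := by
    rw [← Real.exp_log hli, ← Real.exp_nat_mul, hlog]; norm_num
  have hX : Real.exp (δ * L) ≤ li ^ 2 * Real.exp (ti ^ 2 / (2 * Real.pi) * (L - A)) := by
    rw [hli2, ← Real.exp_add]
    exact Real.exp_le_exp.mpr (by nlinarith)
  have htpos : (0:ℝ) < ti ^ 2 := lt_of_lt_of_le (by positivity) ht
  have hc : 0 ≤ lam / 2 * ti ^ 2 * (L - A) := by positivity
  have h2 : lam / 2 * ti ^ 2 * (L - A) * Real.exp (δ * L) ≤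
      lam / 2 * ti ^ 2 * li ^ 2 * (L - A) *
        Real.exp (ti ^ 2 / (2 * Real.pi) * (L - A)) := by
    calc lam / 2 * ti ^ 2 * (L - A) * Real.exp (δ * L)
        ≤ lam / 2 * ti ^ 2 * (L - A) *
            (li ^ 2 * Real.exp (ti ^ 2 / (2 * Real.pi) * (L - A))) :=
          mul_le_mul_of_nonneg_left hX hc
      _ = lam / 2 * ti ^ 2 * li ^ 2 * (L - A) *
            Real.exp (ti ^ 2 / (2 * Real.pi) * (L - A)) := by ring
  refine ⟨?_, h2⟩
  have hexp1 : (1:ℝ) ≤ Real.exp (δ * L) := Real.one_le_exp (by positivity)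
  calc lam * Real.pi * (1 + δ) * L
      = lam / 2 * (4 * Real.pi * (1 + δ)) * (L / 2) * 1 := by ring
    _ ≤ lam / 2 * ti ^ 2 * (L - A) * Real.exp (δ * L) := by
        gcongr
    _ ≤ _ := h2

/-- Key growth estimate: if `w_n = (2π)^{-1/2}(log(R_n/l_n))^{1/2}` is the constant value of
the Moser function on `B_{l_n}`, `t_n² ≥ 4π(1+δ)`, `l_n → 0` and `log(1/R_n) = o(log(1/l_n))`,
then `λ∫_{B_{l_n}} (t_n w_n)² e^{(t_n w_n)²} dx = (λ/2) t_n² l_n² log(R_n/l_n)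
e^{(t_n²/2π) log(R_n/l_n)}`, this quantity is eventually bounded below by
`(λ/2) t_n² log(R_n/l_n) exp(δ' log(1/l_n))` for some `δ' > 0`, and it tends to `+∞`. -/
theorem moser_growth_estimate (lam δ : ℝ) (hlam : 0 < lam) (hδ : 0 < δ)
    (l R t w : ℕ → ℝ)
    (hl : ∀ n, 0 < l n) (hlR : ∀ n, l n < R n) (hR : ∀ n, R n ≤ 1)
    (hl0 : Tendsto l atTop (nhds 0))
    (hsmall : Tendsto (fun n => Real.log (1 / R n) / Real.log (1 / l n)) atTop (nhds 0))
    (ht : ∀ n, 4 * Real.pi * (1 + δ) ≤ (t n) ^ 2)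
    (hw : ∀ n, w n = (Real.sqrt (2 * Real.pi))⁻¹ * Real.sqrt (Real.log (R n / l n))) :
    (∀ n, (∫ _x in Metric.ball (0 : EuclideanSpace ℝ (Fin 2)) (l n),
        lam * (t n * w n) ^ 2 * Real.exp ((t n * w n) ^ 2))
      = lam / 2 * (t n) ^ 2 * (l n) ^ 2 * Real.log (R n / l n) *
          Real.exp ((t n) ^ 2 / (2 * Real.pi) * Real.log (R n / l n))) ∧
    (∃ δ' > (0:ℝ), ∀ᶠ n in atTop,
      lam / 2 * (t n) ^ 2 * Real.log (R n / l n) * Real.exp (δ' * Real.log (1 / l n))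
        ≤ lam / 2 * (t n) ^ 2 * (l n) ^ 2 * Real.log (R n / l n) *
            Real.exp ((t n) ^ 2 / (2 * Real.pi) * Real.log (R n / l n))) ∧
    Tendsto (fun n => lam / 2 * (t n) ^ 2 * (l n) ^ 2 * Real.log (R n / l n) *
        Real.exp ((t n) ^ 2 / (2 * Real.pi) * Real.log (R n / l n))) atTop atTop := by
  have hπ : 0 < Real.pi := Real.pi_pos
  have hRpos : ∀ n, 0 < R n := fun n => (hl n).trans (hlR n)
  have hlogpos : ∀ n, 0 ≤ Real.log (R n / l n) := by
    intro n
    exact Real.log_nonneg (le_of_lt ((one_lt_div (hl n)).mpr (hlR n)))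
  -- Part 1
  have part1 : ∀ n, (∫ _x in Metric.ball (0 : EuclideanSpace ℝ (Fin 2)) (l n),
        lam * (t n * w n) ^ 2 * Real.exp ((t n * w n) ^ 2))
      = lam / 2 * (t n) ^ 2 * (l n) ^ 2 * Real.log (R n / l n) *
          Real.exp ((t n) ^ 2 / (2 * Real.pi) * Real.log (R n / l n)) := by
    intro n
    have hw2 : (t n * w n) ^ 2 = (t n) ^ 2 / (2 * Real.pi) * Real.log (R n / l n) := by
      rw [hw n, mul_pow, mul_pow, inv_pow,
        Real.sq_sqrt (by positivity : (0:ℝ) ≤ 2 * Real.pi), Real.sq_sqrt (hlogpos n)]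
      field_simp
    have hvol : (volume (Metric.ball (0 : EuclideanSpace ℝ (Fin 2)) (l n))).toReal
        = Real.pi * (l n) ^ 2 := by
      rw [EuclideanSpace.volume_ball]
      have hΓ : Real.Gamma ((Fintype.card (Fin 2) : ℝ) / 2 + 1) = 1 := by
        norm_num
      rw [hΓ]
      simp only [Fintype.card_fin]
      rw [ENNReal.toReal_mul, ENNReal.toReal_pow, ENNReal.toReal_ofReal (hl n).le,
        ENNReal.toReal_ofReal (by positivity)]
      rw [div_one, Real.sq_sqrt hπ.le]
      ring
    rw [MeasureTheory.setIntegral_const, measureReal_def, hvol, smul_eq_mul, hw2]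
    field_simp
  -- setup for parts 2 and 3
  have hLA : ∀ n, Real.log (R n / l n) = Real.log (1 / l n) - Real.log (1 / R n) := by
    intro n
    rw [Real.log_div (hRpos n).ne' (hl n).ne', one_div, one_div, Real.log_inv, Real.log_inv]
    ring
  have hA0 : ∀ n, 0 ≤ Real.log (1 / R n) :=
    fun n => Real.log_nonneg (one_le_one_div (hRpos n) (hR n))
  have hLtop : Tendsto (fun n => Real.log (1 / l n)) atTop atTop := by
    have h1 : Tendsto (fun n => (l n)⁻¹) atTop atTop :=
      tendsto_inv_nhdsGT_zero.comp
        (tendsto_nhdsWithin_of_tendsto_nhds_of_eventually_within l hl0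
          (Eventually.of_forall fun n => hl n))
    exact (Real.tendsto_log_atTop.comp h1).congr fun n => by rw [Function.comp_apply, one_div]
  set ε : ℝ := δ / (2 * (1 + δ)) with hε
  have hεpos : 0 < ε := by positivity
  have hev : ∀ᶠ n in atTop,
      2 * (1 + δ) * Real.log (1 / R n) ≤ δ * Real.log (1 / l n) ∧
        0 < Real.log (1 / l n) := by
    filter_upwards [hsmall.eventually_lt_const hεpos, hLtop.eventually_gt_atTop 0] with n h1 h2
    refine ⟨?_, h2⟩
    have hALn : Real.log (1 / R n) ≤ ε * Real.log (1 / l n) :=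
      le_of_lt ((div_lt_iff₀ h2).mp h1)
    have h2e : 2 * (1 + δ) * ε = δ := by rw [hε]; field_simp
    nlinarith [mul_le_mul_of_nonneg_left hALn (by positivity : (0:ℝ) ≤ 2 * (1 + δ))]
  have hkey : ∀ᶠ n in atTop,
      lam * Real.pi * (1 + δ) * Real.log (1 / l n) ≤
          lam / 2 * (t n) ^ 2 * (l n) ^ 2 * Real.log (R n / l n) *
            Real.exp ((t n) ^ 2 / (2 * Real.pi) * Real.log (R n / l n)) ∧
        lam / 2 * (t n) ^ 2 * Real.log (R n / l n) * Real.exp (δ * Real.log (1 / l n)) ≤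
          lam / 2 * (t n) ^ 2 * (l n) ^ 2 * Real.log (R n / l n) *
            Real.exp ((t n) ^ 2 / (2 * Real.pi) * Real.log (R n / l n)) := by
    filter_upwards [hev] with n ⟨hALn, hLn⟩
    have hlogl : Real.log (l n) = -Real.log (1 / l n) := by
      rw [one_div, Real.log_inv]; ring
    have := key_ineq lam δ (l n) (t n) (Real.log (1 / R n)) (Real.log (1 / l n))
      hlam hδ (hl n) hLn hlogl (hA0 n) hALn (ht n)
    rw [hLA n]
    exact this
  refine ⟨part1, ⟨δ, hδ, hkey.mono fun n hn => hn.2⟩, ?_⟩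
  refine tendsto_atTop_mono' atTop (hkey.mono fun n hn => hn.1) ?_
  exact Tendsto.const_mul_atTop (by positivity : (0:ℝ) < lam * Real.pi * (1 + δ)) hLtop
end
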